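/- arXiv:2006.12889 — 4 statements merged into one kernel-verified Lean document; each statement's English description precedes it below -/
import Mathlib

section
/- Every linearizable history is IVL: if a well-formed history H of a deterministic quantitative object has a linearization H' (with matching return values) such that H' ∈ 𝓗, then H is IVL with respect to 𝓗. -/
/-- An event in a history: an invocation or a response, by a process
(identified by a natural number), of an operation (identified by a unique
operation id) on an object from `X`.  Operations are updates or queries;
a response of a query carries `some r` for a return value `r : V`, or
`none` standing for the undefined value `?`. -/
inductive Ev (X V : Type) where
  | inv (proc : ℕ) (opId : ℕ) (obj : X) (isQuery : Bool) (arg : ℕ)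
  | rsp (proc : ℕ) (opId : ℕ) (obj : X) (isQuery : Bool) (ret : Option V)

namespace Ev

variable {X V : Type}

def opId : Ev X V → ℕ
  | .inv _ o _ _ _ => o
  | .rsp _ o _ _ _ => o

def proc : Ev X V → ℕ
  | .inv p _ _ _ _ => p
  | .rsp p _ _ _ _ => p

def obj : Ev X V → X
  | .inv _ _ x _ _ => x
  | .rsp _ _ x _ _ => x

def isQuery : Ev X V → Bool
  | .inv _ _ _ q _ => q
  | .rsp _ _ _ q _ => q

def isInv : Ev X V → Bool
  | .inv _ _ _ _ _ => true
  | .rsp _ _ _ _ _ => false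

def retVal : Ev X V → Option V
  | .inv _ _ _ _ _ => none
  | .rsp _ _ _ _ r => r

/-- The skeleton of an event: replace the return value of a response by `?`. -/
def skel : Ev X V → Ev X V
  | .inv p o x q a => .inv p o x q a
  | .rsp p o x q _ => .rsp p o x q none

end Ev

namespace Hist

variable {X V : Type}

/-- The skeleton `H?` of a history `H`: all return values replaced by `?`. -/
def skeleton (H : List (Ev X V)) : List (Ev X V) := H.map Ev.skel

def IsSkeleton (H : List (Ev X V)) : Prop := skeleton H = H

/-- The event at index `i` of `H` is an invocation of operation `o`. -/
def InvAt (H : List (Ev X V)) (o i : ℕ) : Prop :=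
  ∃ e, H[i]? = some e ∧ e.isInv = true ∧ e.opId = o

/-- The event at index `i` of `H` is a response of operation `o`. -/
def RspAt (H : List (Ev X V)) (o i : ℕ) : Prop :=
  ∃ e, H[i]? = some e ∧ e.isInv = false ∧ e.opId = o

def Invoked (H : List (Ev X V)) (o : ℕ) : Prop := ∃ i, InvAt H o i

def Responded (H : List (Ev X V)) (o : ℕ) : Prop := ∃ i, RspAt H o i

/-- Operation `o` is pending in `H`: it is invoked but never responds. -/
def Pending (H : List (Ev X V)) (o : ℕ) : Prop := Invoked H o ∧ ¬ Responded H o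

/-- `o1 ≺_H o2`: a response of `o1` occurs before an invocation of `o2`. -/
def Precedes (H : List (Ev X V)) (o1 o2 : ℕ) : Prop :=
  ∃ i j, i < j ∧ RspAt H o1 i ∧ InvAt H o2 j

/-- Well-formedness of a history: operation ids identify operations uniquely,
every response is preceded by a matching invocation, and no process has two
concurrent operations. -/
structure WellFormed (H : List (Ev X V)) : Prop where
  uniqueInv : ∀ o i j, InvAt H o i → InvAt H o j → i = j
  uniqueRsp : ∀ o i j, RspAt H o i → RspAt H o j → i = j
  rspMatched : ∀ j e', H[j]? = some e' → e'.isInv = false →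
    ∃ (i : ℕ) (e : Ev X V), i < j ∧ H[i]? = some e ∧ e.isInv = true ∧ e.opId = e'.opId ∧
      e.proc = e'.proc ∧ e.obj = e'.obj ∧ e.isQuery = e'.isQuery
  procSeq : ∀ i j e e', H[i]? = some e → H[j]? = some e' →
    e.isInv = true → e'.isInv = true → e.proc = e'.proc → i < j →
    ∃ k, k < j ∧ RspAt H e.opId k

/-- A sequential history alternates invocations with matching responses,
beginning with an invocation. -/
def Sequential (H : List (Ev X V)) : Prop :=
  ∀ k e, H[k]? = some e →
    (k % 2 = 0 → e.isInv = true) ∧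
    (k % 2 = 1 → e.isInv = false ∧
      ∃ e', H[k - 1]? = some e' ∧ e'.isInv = true ∧ e'.opId = e.opId ∧
        e'.proc = e.proc ∧ e'.obj = e.obj ∧ e'.isQuery = e.isQuery)

/-- Every invoked operation has a response. -/
def Complete (H : List (Ev X V)) : Prop := ∀ o, Invoked H o → Responded H o

/-- `H''` is a completion of `H`: remove the events of some pending operations
and append matching responses for (some of) the remaining pending operations. -/
def IsCompletion (H H'' : List (Ev X V)) : Prop :=
  ∃ (P : ℕ → Bool) (R : List (Ev X V)),
    (∀ o, P o = true → Pending H o) ∧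
    (∀ e ∈ R, e.isInv = false ∧ Pending H e.opId ∧ P e.opId = false ∧
      ∃ (i : ℕ) (e' : Ev X V), H[i]? = some e' ∧ e'.isInv = true ∧ e'.opId = e.opId ∧
        e'.proc = e.proc ∧ e'.obj = e.obj ∧ e'.isQuery = e.isQuery) ∧
    H'' = H.filter (fun e => !(P e.opId)) ++ R

/-- `L` is a linearization of `H`: `L` is a complete sequential history
containing the same invocations and responses as some completion of `H`,
and `L` preserves the precedence order `≺_H`. -/
def Linearization (L H : List (Ev X V)) : Prop :=
  Sequential L ∧ Complete L ∧
  (∃ H'', IsCompletion H H'' ∧ L.Perm H'') ∧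
  (∀ o1 o2, Precedes H o1 o2 → Invoked L o2 → Precedes L o1 o2)

/-- Query operation `o` returns the value `v` in `H`. -/
def QueryReturns (H : List (Ev X V)) (o : ℕ) (v : V) : Prop :=
  ∃ (i : ℕ) (e : Ev X V), H[i]? = some e ∧ e.isInv = false ∧ e.isQuery = true ∧
    e.opId = o ∧ e.retVal = some v

/-- Query operation `o` completes (has a response) in `H`. -/
def QueryCompletes (H : List (Ev X V)) (o : ℕ) : Prop :=
  ∃ (i : ℕ) (e : Ev X V), H[i]? = some e ∧ e.isInv = false ∧ e.isQuery = true ∧ e.opId = o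

/-- The return value (if any) of query `o` in `H`. -/
def retOf (H : List (Ev X V)) (o : ℕ) : Option V :=
  (H.find? (fun e => !e.isInv && e.isQuery && e.opId == o)).bind Ev.retVal

/-- `H|ₓ`: the projection of `H` onto the events on object `x`. -/
def proj [DecidableEq X] (H : List (Ev X V)) (x : X) : List (Ev X V) :=
  H.filter (fun e => decide (e.obj = x))

end Hist

/-- A deterministic quantitative sequential specification: a set of sequential
histories such that for every sequential skeleton history `S` there is exactly
one history `tau S` in the set whose skeleton is `S`; queries in specification
histories return actual (defined) values. -/
structure DetSpec (X V : Type) where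
  mem : List (Ev X V) → Prop
  mem_sequential : ∀ H, mem H → Hist.Sequential H
  tau : List (Ev X V) → List (Ev X V)
  tau_mem : ∀ S, Hist.Sequential S → Hist.IsSkeleton S → mem (tau S)
  tau_skeleton : ∀ S, Hist.Sequential S → Hist.IsSkeleton S → Hist.skeleton (tau S) = S
  tau_unique : ∀ S H, Hist.Sequential S → Hist.IsSkeleton S → mem H →
    Hist.skeleton H = S → H = tau S
  total : ∀ H, mem H → ∀ (i : ℕ) (e : Ev X V), H[i]? = some e → e.isInv = false → e.isQuery = true →
    ∃ v, e.retVal = some v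

/-- A history `H` is IVL w.r.t. specification `spec`: there are two
linearizations `H1, H2` of the skeleton `H?` such that the return value of
every query that returns in `H` is bounded between its return values in
`τ(H1)` and `τ(H2)`. -/
def IVL {X V : Type} [LinearOrder V] (H : List (Ev X V)) (spec : DetSpec X V) : Prop :=
  ∃ H1 H2 : List (Ev X V),
    Hist.IsSkeleton H1 ∧ Hist.IsSkeleton H2 ∧
    Hist.Linearization H1 (Hist.skeleton H) ∧ Hist.Linearization H2 (Hist.skeleton H) ∧
    ∀ o v, Hist.QueryReturns H o v →
      ∃ v1 v2, Hist.QueryReturns (spec.tau H1) o v1 ∧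
        Hist.QueryReturns (spec.tau H2) o v2 ∧ v1 ≤ v ∧ v ≤ v2

namespace Ev
variable {X V : Type}
@[simp] lemma skel_opId (e : Ev X V) : e.skel.opId = e.opId := by cases e <;> rfl
@[simp] lemma skel_proc (e : Ev X V) : e.skel.proc = e.proc := by cases e <;> rfl
@[simp] lemma skel_obj (e : Ev X V) : e.skel.obj = e.obj := by cases e <;> rfl
@[simp] lemma skel_isQuery (e : Ev X V) : e.skel.isQuery = e.isQuery := by cases e <;> rfl
@[simp] lemma skel_isInv (e : Ev X V) : e.skel.isInv = e.isInv := by cases e <;> rfl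
@[simp] lemma skel_skel (e : Ev X V) : e.skel.skel = e.skel := by cases e <;> rfl
end Ev

namespace Hist
variable {X V : Type}

lemma getElem?_skeleton (H : List (Ev X V)) (i : ℕ) :
    (skeleton H)[i]? = (H[i]?).map Ev.skel := by
  simp [skeleton]

lemma isSkeleton_skeleton (H : List (Ev X V)) : IsSkeleton (skeleton H) := by
  simp [IsSkeleton, skeleton, List.map_map, Function.comp_def]

lemma invAt_skeleton {H : List (Ev X V)} {o i : ℕ} :
    InvAt (skeleton H) o i ↔ InvAt H o i := by
  constructor
  · rintro ⟨e, he, h1, h2⟩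
    rw [getElem?_skeleton] at he
    rcases Option.map_eq_some_iff.1 he with ⟨e', he', rfl⟩
    exact ⟨e', he', by simpa using h1, by simpa using h2⟩
  · rintro ⟨e, he, h1, h2⟩
    exact ⟨e.skel, by rw [getElem?_skeleton, he]; rfl, by simpa, by simpa⟩

lemma rspAt_skeleton {H : List (Ev X V)} {o i : ℕ} :
    RspAt (skeleton H) o i ↔ RspAt H o i := by
  constructor
  · rintro ⟨e, he, h1, h2⟩
    rw [getElem?_skeleton] at he
    rcases Option.map_eq_some_iff.1 he with ⟨e', he', rfl⟩
    exact ⟨e', he', by simpa using h1, by simpa using h2⟩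
  · rintro ⟨e, he, h1, h2⟩
    exact ⟨e.skel, by rw [getElem?_skeleton, he]; rfl, by simpa, by simpa⟩

lemma invoked_skeleton {H : List (Ev X V)} {o : ℕ} :
    Invoked (skeleton H) o ↔ Invoked H o := by
  unfold Invoked; simp only [invAt_skeleton]

lemma responded_skeleton {H : List (Ev X V)} {o : ℕ} :
    Responded (skeleton H) o ↔ Responded H o := by
  unfold Responded; simp only [rspAt_skeleton]

lemma pending_skeleton {H : List (Ev X V)} {o : ℕ} :
    Pending (skeleton H) o ↔ Pending H o := by
  unfold Pending; rw [invoked_skeleton, responded_skeleton]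

lemma precedes_skeleton {H : List (Ev X V)} {o1 o2 : ℕ} :
    Precedes (skeleton H) o1 o2 ↔ Precedes H o1 o2 := by
  unfold Precedes; simp only [invAt_skeleton, rspAt_skeleton]

lemma sequential_skeleton {H : List (Ev X V)} (h : Sequential H) :
    Sequential (skeleton H) := by
  intro k e he
  rw [getElem?_skeleton] at he
  rcases Option.map_eq_some_iff.1 he with ⟨e', he', rfl⟩
  obtain ⟨h0, h1⟩ := h k e' he'
  refine ⟨fun hk => by simpa using h0 hk, fun hk => ?_⟩
  obtain ⟨hinv, e'', he'', p1, p2, p3, p4, p5⟩ := h1 hk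
  exact ⟨by simpa using hinv, e''.skel, by rw [getElem?_skeleton, he'']; rfl,
    by simpa, by simpa, by simpa, by simpa, by simpa⟩

lemma complete_skeleton {H : List (Ev X V)} (h : Complete H) :
    Complete (skeleton H) := by
  intro o ho
  exact responded_skeleton.2 (h o (invoked_skeleton.1 ho))

lemma skeleton_filter_opId (H : List (Ev X V)) (P : ℕ → Bool) :
    skeleton (H.filter (fun e => !(P e.opId)))
      = (skeleton H).filter (fun e => !(P e.opId)) := by
  unfold skeleton
  rw [List.filter_map]
  congr 1
  apply List.filter_congr
  intro e _
  simp [Function.comp]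

end Hist

lemma Hist.skeleton_append (A B : List (Ev X V)) :
    Hist.skeleton (A ++ B) = Hist.skeleton A ++ Hist.skeleton B := by
  simp [Hist.skeleton]


/-- **Every linearizable history is IVL**: if a well-formed history `H` of a
deterministic quantitative object has a linearization `H'` (with matching
return values) belonging to the sequential specification, then `H` is IVL
with respect to that specification. -/
theorem linearizable_implies_ivl {X V : Type} [LinearOrder V]
    (H H' : List (Ev X V)) (spec : DetSpec X V)
    (hwf : Hist.WellFormed H)
    (hlin : Hist.Linearization H' H)
    (hmem : spec.mem H') :
    IVL H spec := by
  obtain ⟨hseq, hcomp, ⟨H'', ⟨P, R, hP, hR, hH''⟩, hperm⟩, hprec⟩ := hlin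
  set L := Hist.skeleton H' with hL
  have hskL : Hist.IsSkeleton L := Hist.isSkeleton_skeleton H'
  have hseqL : Hist.Sequential L := Hist.sequential_skeleton hseq
  have htau : H' = spec.tau L := spec.tau_unique L H' hseqL hskL hmem rfl
  have hlinL : Hist.Linearization L (Hist.skeleton H) := by
    refine ⟨hseqL, Hist.complete_skeleton hcomp,
      ⟨Hist.skeleton H'', ⟨P, Hist.skeleton R, ?_, ?_, ?_⟩, List.Perm.map _ hperm⟩, ?_⟩
    · intro o ho
      exact Hist.pending_skeleton.2 (hP o ho)
    · intro e he
      rcases List.mem_map.1 he with ⟨e0, he0, rfl⟩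
      obtain ⟨h1, h2, h3, i, e', hi, q1, q2, q3, q4, q5⟩ := hR e0 he0
      refine ⟨by simpa using h1, ?_, by simpa using h3, i, e'.skel, ?_, ?_, ?_, ?_, ?_, ?_⟩
      · simpa using Hist.pending_skeleton.2 h2
      · rw [Hist.getElem?_skeleton, hi]; rfl
      · simpa using q1
      · simpa using q2
      · simpa using q3
      · simpa using q4
      · simpa using q5
    · rw [hH'', Hist.skeleton_append, Hist.skeleton_filter_opId]
    · intro o1 o2 hp hin
      exact Hist.precedes_skeleton.2
        (hprec o1 o2 (Hist.precedes_skeleton.1 hp) (Hist.invoked_skeleton.1 hin))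
  refine ⟨L, L, hskL, hskL, hlinL, hlinL, ?_⟩
  rintro o v ⟨i, e, hi, h1, h2, h3, h4⟩
  have hoRes : Hist.Responded H o := ⟨i, e, hi, h1, h3⟩
  have hnp : ¬ Hist.Pending H o := fun h => h.2 hoRes
  have hPo : P e.opId = false := by
    cases hPe : P e.opId with
    | false => rfl
    | true => exact absurd (hP e.opId hPe) (h3 ▸ hnp)
  have heH : e ∈ H := by
    have := List.getElem?_eq_some_iff.1 hi
    obtain ⟨hlt, rfl⟩ := this
    exact List.getElem_mem _
  have heH'' : e ∈ H'' := by
    rw [hH'']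
    exact List.mem_append_left _ (List.mem_filter.2 ⟨heH, by simp [hPo]⟩)
  have heH' : e ∈ H' := hperm.symm.subset heH''
  obtain ⟨j, hj, hj'⟩ := List.mem_iff_getElem.1 heH'
  have hjq : (spec.tau L)[j]? = some e := by
    rw [← htau, List.getElem?_eq_some_iff]
    exact ⟨hj, hj'⟩
  exact ⟨v, v, ⟨j, e, hjq, h1, h2, h3, h4⟩, ⟨j, e, hjq, h1, h2, h3, h4⟩, le_refl v, le_refl v⟩
end

section
/- Well-definedness of v_min and v_max: Let H be a well-formed history, Q a query that returns in H, and 𝓗 a deterministic quantitative sequential specification. Then the set {ret(Q, τ_𝓗(L)) : L a linearization of H?} of values that Q may return across all linearizations of the skeleton of H is nonempty and finite; in particular its minimum and maximum exist. -/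
/-- The set of values a query may return across all linearizations of the
skeleton of `H`, under specification `spec`. -/
def linRetSet {X V : Type} [LinearOrder V]
    (H : List (Ev X V)) (spec : DetSpec X V) (o : ℕ) : Set V :=
  {r | ∃ L : List (Ev X V), Hist.IsSkeleton L ∧
    Hist.Linearization L (Hist.skeleton H) ∧ Hist.QueryReturns (spec.tau L) o r}

namespace VMinAux

open Hist

variable {X V : Type}

@[simp] lemma skel_opId (e : Ev X V) : e.skel.opId = e.opId := by cases e <;> rfl
@[simp] lemma skel_isInv (e : Ev X V) : e.skel.isInv = e.isInv := by cases e <;> rfl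
@[simp] lemma skel_proc (e : Ev X V) : e.skel.proc = e.proc := by cases e <;> rfl
@[simp] lemma skel_obj (e : Ev X V) : e.skel.obj = e.obj := by cases e <;> rfl
@[simp] lemma skel_isQuery (e : Ev X V) : e.skel.isQuery = e.isQuery := by cases e <;> rfl
@[simp] lemma skel_skel (e : Ev X V) : e.skel.skel = e.skel := by cases e <;> rfl

lemma map_eq_self_forall {α : Type*} {f : α → α} :
    ∀ {l : List α}, l.map f = l → ∀ a ∈ l, f a = a := by
  intro l
  induction l with
  | nil => intro _ a ha; simp at ha
  | cons c t ih =>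
    intro h a ha
    rw [List.map_cons, List.cons.injEq] at h
    rcases List.mem_cons.mp ha with rfl | ha
    · exact h.1
    · exact ih h.2 a ha

lemma two_le_countP {α : Type*} {p : α → Bool} :
    ∀ {l : List α} {i j : ℕ} {a b : α}, i < j → l[i]? = some a → l[j]? = some b →
      p a = true → p b = true → 2 ≤ l.countP p := by
  intro l
  induction l with
  | nil => intro i j a b _ _ hb _ _; simp at hb
  | cons c t ih =>
    intro i j a b hij ha hb pa pb
    match i, j with
    | _, 0 => exact absurd hij (by omega)
    | 0, j+1 =>
      have hc : c = a := by simpa using ha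
      have hb' : t[j]? = some b := by simpa using hb
      have hpos : 0 < t.countP p :=
        List.countP_pos_iff.mpr ⟨b, List.mem_of_getElem? hb', pb⟩
      rw [List.countP_cons]
      subst hc
      rw [if_pos pa]
      omega
    | i+1, j+1 =>
      have := ih (i := i) (j := j) (by omega) (by simpa using ha) (by simpa using hb) pa pb
      rw [List.countP_cons]
      omega

lemma countP_two_pos {α : Type*} {p : α → Bool} :
    ∀ {l : List α}, 2 ≤ l.countP p →
      ∃ (i j : ℕ) (a b : α), i < j ∧ l[i]? = some a ∧ l[j]? = some b ∧ p a = true ∧ p b = true := by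
  intro l
  induction l with
  | nil => intro h; simp at h
  | cons c t ih =>
    intro h
    rw [List.countP_cons] at h
    by_cases hc : p c = true
    · by_cases h2 : 2 ≤ t.countP p
      · obtain ⟨i, j, a, b, hij, ha, hb, pa, pb⟩ := ih h2
        exact ⟨i+1, j+1, a, b, by omega, by simpa using ha, by simpa using hb, pa, pb⟩
      · rw [if_pos hc] at h
        have h1 : 0 < t.countP p := by omega
        obtain ⟨b, hbmem, pb⟩ := List.countP_pos_iff.mp h1
        obtain ⟨k, hk⟩ := List.mem_iff_getElem?.mp hbmem
        exact ⟨0, k+1, c, b, by omega, by simp, by simpa using hk, hc, pb⟩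
    · rw [if_neg hc] at h
      obtain ⟨i, j, a, b, hij, ha, hb, pa, pb⟩ := ih (by omega)
      exact ⟨i+1, j+1, a, b, by omega, by simpa using ha, by simpa using hb, pa, pb⟩

lemma filter_two_pos {α : Type*} {p : α → Bool} :
    ∀ {l : List α} {i j : ℕ} {a b : α}, i < j → l[i]? = some a → l[j]? = some b →
      p a = true → p b = true →
      ∃ (k₁ k₂ : ℕ), k₁ < k₂ ∧ (l.filter p)[k₁]? = some a ∧ (l.filter p)[k₂]? = some b := by
  intro l
  induction l with
  | nil => intro i j a b _ _ hb _ _; simp at hb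
  | cons c t ih =>
    intro i j a b hij ha hb pa pb
    match i, j with
    | _, 0 => exact absurd hij (by omega)
    | 0, j+1 =>
      have hc : c = a := by simpa using ha
      subst hc
      have hb' : t[j]? = some b := by simpa using hb
      have hbmem : b ∈ t.filter p := List.mem_filter.mpr ⟨List.mem_of_getElem? hb', pb⟩
      obtain ⟨k, hk⟩ := List.mem_iff_getElem?.mp hbmem
      refine ⟨0, k+1, by omega, ?_, ?_⟩
      · rw [List.filter_cons_of_pos pa]; simp
      · rw [List.filter_cons_of_pos pa, List.getElem?_cons_succ]
        exact hk
    | i+1, j+1 =>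
      obtain ⟨k₁, k₂, hk, h1, h2⟩ :=
        ih (i := i) (j := j) (by omega) (by simpa using ha) (by simpa using hb) pa pb
      by_cases hc : p c = true
      · exact ⟨k₁+1, k₂+1, by omega,
          by rw [List.filter_cons_of_pos hc, List.getElem?_cons_succ]; exact h1,
          by rw [List.filter_cons_of_pos hc, List.getElem?_cons_succ]; exact h2⟩
      · have hc' : p c = false := by simpa using hc
        exact ⟨k₁, k₂, hk, by rw [List.filter_cons_of_neg (by simp [hc'])]; exact h1,
          by rw [List.filter_cons_of_neg (by simp [hc'])]; exact h2⟩

lemma pair_idx {α : Type*} (f : α → α) :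
    ∀ (l : List α) (k : ℕ),
      (l.flatMap (fun e => [f e, e]))[2*k]? = (l[k]?).map f ∧
      (l.flatMap (fun e => [f e, e]))[2*k+1]? = l[k]? := by
  intro l
  induction l with
  | nil => intro k; simp
  | cons c t ih =>
    intro k
    rw [List.flatMap_cons]
    have he : ([f c, c] ++ t.flatMap (fun e => [f e, e]))
        = f c :: c :: t.flatMap (fun e => [f e, e]) := rfl
    rw [he]
    cases k with
    | zero => simp
    | succ k =>
      have h1 : 2*(k+1) = (2*k)+1+1 := by ring
      have h2 : 2*(k+1)+1 = ((2*k)+1+1)+1 := by ring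
      constructor
      · rw [h1, List.getElem?_cons_succ, List.getElem?_cons_succ, List.getElem?_cons_succ]
        exact (ih k).1
      · rw [h2, List.getElem?_cons_succ, List.getElem?_cons_succ, List.getElem?_cons_succ]
        exact (ih k).2

lemma bind_pair_perm {α : Type*} (f : α → α) :
    ∀ (l : List α), (l.flatMap (fun e => [f e, e])).Perm (l.map f ++ l) := by
  intro l
  induction l with
  | nil => simp
  | cons c t ih =>
    rw [List.flatMap_cons, List.map_cons]
    have he : ([f c, c] ++ t.flatMap (fun e => [f e, e]))
        = f c :: c :: t.flatMap (fun e => [f e, e]) := rfl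
    rw [he, List.cons_append]
    refine List.Perm.cons _ ?_
    exact (ih.cons c).trans (List.perm_middle.symm)

lemma skeleton_getElem? (H : List (Ev X V)) (i : ℕ) :
    (skeleton H)[i]? = (H[i]?).map Ev.skel := by
  simp [Hist.skeleton]

lemma invAt_skeleton {H : List (Ev X V)} {o i : ℕ} :
    InvAt (skeleton H) o i ↔ InvAt H o i := by
  unfold Hist.InvAt
  rw [skeleton_getElem?]
  constructor
  · rintro ⟨e, he, h1, h2⟩
    cases h : H[i]? with
    | none => rw [h] at he; simp at he
    | some e0 =>
      rw [h] at he
      obtain rfl : e0.skel = e := by simpa using he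
      exact ⟨e0, rfl, by simpa using h1, by simpa using h2⟩
  · rintro ⟨e, he, h1, h2⟩
    exact ⟨e.skel, by rw [he]; rfl, by simpa, by simpa⟩

lemma rspAt_skeleton {H : List (Ev X V)} {o i : ℕ} :
    RspAt (skeleton H) o i ↔ RspAt H o i := by
  unfold Hist.RspAt
  rw [skeleton_getElem?]
  constructor
  · rintro ⟨e, he, h1, h2⟩
    cases h : H[i]? with
    | none => rw [h] at he; simp at he
    | some e0 =>
      rw [h] at he
      obtain rfl : e0.skel = e := by simpa using he
      exact ⟨e0, rfl, by simpa using h1, by simpa using h2⟩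
  · rintro ⟨e, he, h1, h2⟩
    exact ⟨e.skel, by rw [he]; rfl, by simpa, by simpa⟩

lemma wf_skeleton {H : List (Ev X V)} (hwf : WellFormed H) : WellFormed (skeleton H) := by
  constructor
  · intro o i j hi hj
    exact hwf.uniqueInv o i j (invAt_skeleton.mp hi) (invAt_skeleton.mp hj)
  · intro o i j hi hj
    exact hwf.uniqueRsp o i j (rspAt_skeleton.mp hi) (rspAt_skeleton.mp hj)
  · intro j e' hj hinv
    rw [skeleton_getElem?] at hj
    cases h : H[j]? with
    | none => rw [h] at hj; simp at hj
    | some e0 =>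
      rw [h] at hj
      obtain rfl : e0.skel = e' := by simpa using hj
      obtain ⟨i, e, hij, hi, h1, h2, h3, h4, h5⟩ := hwf.rspMatched j e0 h (by simpa using hinv)
      exact ⟨i, e.skel, hij, by rw [skeleton_getElem?, hi]; rfl, by simpa using h1,
        by simpa using h2, by simpa using h3, by simpa using h4, by simpa using h5⟩
  · intro i j e e' hi hj hinv hinv' hproc hij
    rw [skeleton_getElem?] at hi hj
    cases h : H[i]? with
    | none => rw [h] at hi; simp at hi
    | some e0 =>
      cases h' : H[j]? with
      | none => rw [h'] at hj; simp at hj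
      | some e0' =>
        rw [h] at hi; rw [h'] at hj
        obtain rfl : e0.skel = e := by simpa using hi
        obtain rfl : e0'.skel = e' := by simpa using hj
        obtain ⟨k, hk, hrsp⟩ := hwf.procSeq i j e0 e0' h h' (by simpa using hinv)
          (by simpa using hinv') (by simpa using hproc) hij
        refine ⟨k, hk, ?_⟩
        rw [skel_opId]
        exact rspAt_skeleton.mpr hrsp

lemma isSkeleton_skeleton (H : List (Ev X V)) : IsSkeleton (skeleton H) := by
  show Hist.skeleton (Hist.skeleton H) = Hist.skeleton H
  unfold Hist.skeleton
  rw [List.map_map]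
  exact List.map_congr_left (fun a _ => skel_skel a)

lemma exists_lin (S : List (Ev X V)) (hwfS : WellFormed S) (hskelS : IsSkeleton S) :
    ∃ L, IsSkeleton L ∧ Linearization L S ∧ ∀ e ∈ S, e.isInv = false → e ∈ L := by
  classical
  set rs : List (Ev X V) := S.filter (fun e => !e.isInv) with hrs_def
  have hrs_mem : ∀ e ∈ rs, e ∈ S ∧ e.isInv = false := by
    intro e he
    have := List.mem_filter.mp he
    exact ⟨this.1, by simpa using this.2⟩
  set f : Ev X V → Ev X V :=
    fun e => (S.find? (fun e' => e'.isInv && (e'.opId == e.opId))).getD e with hf_def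
  have hf : ∀ e ∈ rs, f e ∈ S ∧ (f e).isInv = true ∧ (f e).opId = e.opId ∧
      (f e).proc = e.proc ∧ (f e).obj = e.obj ∧ (f e).isQuery = e.isQuery := by
    intro e he
    obtain ⟨heS, heInv⟩ := hrs_mem e he
    obtain ⟨j, hj⟩ := List.mem_iff_getElem?.mp heS
    obtain ⟨i, e1, hij, hi, h1, h2, h3, h4, h5⟩ := hwfS.rspMatched j e hj heInv
    have hsome : (S.find? (fun e' => e'.isInv && (e'.opId == e.opId))).isSome := by
      rw [List.find?_isSome]
      exact ⟨e1, List.mem_of_getElem? hi, by simp [h1, h2]⟩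
    obtain ⟨e0, he0⟩ := Option.isSome_iff_exists.mp hsome
    have hp := List.find?_some he0
    have he0S := List.mem_of_find?_eq_some he0
    simp only [Bool.and_eq_true, beq_iff_eq] at hp
    obtain ⟨i0, hi0⟩ := List.mem_iff_getElem?.mp he0S
    have hii : i0 = i := hwfS.uniqueInv e.opId i0 i ⟨e0, hi0, hp.1, hp.2⟩ ⟨e1, hi, h1, h2⟩
    subst hii
    rw [hi] at hi0
    obtain rfl : e1 = e0 := Option.some.inj hi0
    have hfe : f e = e1 := by rw [hf_def]; simp only []; rw [he0]; rfl
    rw [hfe]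
    exact ⟨he0S, hp.1, hp.2, h3, h4, h5⟩
  have hfinj : ∀ a, a ∈ S → a.isInv = true → ∀ e ∈ rs, a.opId = e.opId → f e = a := by
    intro a haS haInv e he hop
    obtain ⟨ia, hia⟩ := List.mem_iff_getElem?.mp haS
    obtain ⟨hfS, hfInv, hfop, _, _, _⟩ := hf e he
    obtain ⟨i0, hi0⟩ := List.mem_iff_getElem?.mp hfS
    have hii : i0 = ia := hwfS.uniqueInv e.opId i0 ia ⟨f e, hi0, hfInv, hfop⟩ ⟨a, hia, haInv, hop⟩
    subst hii
    rw [hia] at hi0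
    exact (Option.some.inj hi0).symm
  set L0 : List (Ev X V) := rs.flatMap (fun e => [f e, e]) with hL0_def
  have hidx : ∀ k, L0[2*k]? = (rs[k]?).map f ∧ L0[2*k+1]? = rs[k]? := by
    intro k; rw [hL0_def]; exact pair_idx f rs k
  have hseq : Sequential L0 := by
    intro k e hk
    constructor
    · intro hk0
      have h2k : 2 * (k / 2) = k := by omega
      have hk' : L0[2*(k/2)]? = some e := by rw [h2k]; exact hk
      rw [(hidx (k/2)).1] at hk'
      cases h : rs[k/2]? with
      | none => rw [h] at hk'; simp at hk'
      | some e1 =>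
        rw [h] at hk'
        obtain rfl : f e1 = e := by simpa using hk'
        exact (hf e1 (List.mem_of_getElem? h)).2.1
    · intro hk1
      have h2k : 2 * (k / 2) + 1 = k := by omega
      have hk' : L0[2*(k/2)+1]? = some e := by rw [h2k]; exact hk
      rw [(hidx (k/2)).2] at hk'
      have he := List.mem_of_getElem? hk'
      have heInv := (hrs_mem e he).2
      obtain ⟨_, h1, h2, h3, h4, h5⟩ := hf e he
      refine ⟨heInv, f e, ?_, h1, h2, h3, h4, h5⟩
      have hm1 : k - 1 = 2 * (k/2) := by omega
      rw [hm1, (hidx (k/2)).1, hk']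
      rfl
  have hcompl : Complete L0 := by
    rintro o ⟨i, e, hi, hinv, hop⟩
    have hi2 : i % 2 = 0 := by
      by_contra h
      have h2k : 2 * (i / 2) + 1 = i := by omega
      have hk' : L0[2*(i/2)+1]? = some e := by rw [h2k]; exact hi
      rw [(hidx (i/2)).2] at hk'
      have := (hrs_mem e (List.mem_of_getElem? hk')).2
      rw [this] at hinv; simp at hinv
    have h2k : 2 * (i / 2) = i := by omega
    have hk' : L0[2*(i/2)]? = some e := by rw [h2k]; exact hi
    rw [(hidx (i/2)).1] at hk'
    cases h : rs[i/2]? with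
    | none => rw [h] at hk'; simp at hk'
    | some e1 =>
      rw [h] at hk'
      obtain rfl : f e1 = e := by simpa using hk'
      have he1 := List.mem_of_getElem? h
      refine ⟨2*(i/2)+1, e1, ?_, (hrs_mem e1 he1).2, ?_⟩
      · rw [(hidx (i/2)).2, h]
      · rw [← (hf e1 he1).2.2.1]; exact hop
  set P : ℕ → Bool := fun o' => decide (Pending S o') with hP_def
  set prd : Ev X V → Bool := fun e => !(P e.opId) with hprd_def
  have hresp_of_respS : ∀ a ∈ S, a.isInv = false → Responded S a.opId := by
    intro a ha hInv
    obtain ⟨j, hj⟩ := List.mem_iff_getElem?.mp ha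
    exact ⟨j, a, hj, hInv, rfl⟩
  have hprd_resp : ∀ (e : Ev X V), Responded S e.opId → prd e = true := by
    intro e hr
    have hnp : ¬ Pending S e.opId := fun hp => hp.2 hr
    rw [hprd_def]
    simp only [hP_def]
    simp [hnp]
  have hprd_inv : ∀ a ∈ S, a.isInv = true → (prd a = true ↔ Responded S a.opId) := by
    intro a haS haInv
    have hinvk : Invoked S a.opId := by
      obtain ⟨i, hi⟩ := List.mem_iff_getElem?.mp haS
      exact ⟨i, a, hi, haInv, rfl⟩
    constructor
    · intro h
      by_contra hr
      have hp : Pending S a.opId := ⟨hinvk, hr⟩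
      rw [hprd_def] at h
      simp only [hP_def] at h
      simp [hp] at h
    · intro hr
      exact hprd_resp a hr
  have hperm1 : L0.Perm (rs.map f ++ rs) := by rw [hL0_def]; exact bind_pair_perm f rs
  have hsplit : ((S.filter prd).filter (fun e => e.isInv) ++
      (S.filter prd).filter (fun e => !e.isInv)).Perm (S.filter prd) :=
    List.filter_append_perm (fun e => e.isInv) (S.filter prd)
  have hrspL : (S.filter prd).filter (fun e => !e.isInv) = rs := by
    rw [List.filter_filter, hrs_def]
    apply List.filter_congr
    intro a ha
    cases hA : a.isInv with
    | true => simp [hA]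
    | false => simp [hA, hprd_resp a (hresp_of_respS a ha hA)]
  have hcount_inv : ∀ a : Ev X V, a.isInv = true → S.count a ≤ 1 := by
    intro a hA
    by_contra h
    have h2 : 2 ≤ S.countP (fun b => b == a) := by rw [← List.count_eq_countP]; omega
    obtain ⟨i, j, b, c, hij, hb, hc, pb, pc⟩ := countP_two_pos h2
    have hba : b = a := by simpa using pb
    have hca : c = a := by simpa using pc
    exact absurd (hwfS.uniqueInv a.opId i j ⟨b, hb, by rw [hba]; exact hA, by rw [hba]⟩
      ⟨c, hc, by rw [hca]; exact hA, by rw [hca]⟩) (by omega)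
  have hcount_rsp : ∀ a : Ev X V, a.isInv = false → S.count a ≤ 1 := by
    intro a hA
    by_contra h
    have h2 : 2 ≤ S.countP (fun b => b == a) := by rw [← List.count_eq_countP]; omega
    obtain ⟨i, j, b, c, hij, hb, hc, pb, pc⟩ := countP_two_pos h2
    have hba : b = a := by simpa using pb
    have hca : c = a := by simpa using pc
    exact absurd (hwfS.uniqueRsp a.opId i j ⟨b, hb, by rw [hba]; exact hA, by rw [hba]⟩
      ⟨c, hc, by rw [hca]; exact hA, by rw [hca]⟩) (by omega)
  have hrs_nodup : rs.Nodup := by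
    rw [List.nodup_iff_count_le_one]
    intro a
    by_cases ha : a ∈ rs
    · calc rs.count a ≤ S.count a := by
            rw [hrs_def]; exact (List.filter_sublist (l := S)).count_le a
        _ ≤ 1 := hcount_rsp a (hrs_mem a ha).2
    · rw [List.count_eq_zero.mpr ha]
      exact Nat.zero_le 1
  have hinvL_nodup : ((S.filter prd).filter (fun e => e.isInv)).Nodup := by
    rw [List.nodup_iff_count_le_one]
    intro a
    by_cases ha : a ∈ (S.filter prd).filter (fun e => e.isInv)
    · have haInv : a.isInv = true := (List.mem_filter.mp ha).2
      calc ((S.filter prd).filter (fun e => e.isInv)).count a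
          ≤ (S.filter prd).count a := (List.filter_sublist).count_le a
        _ ≤ S.count a := (List.filter_sublist (l := S)).count_le a
        _ ≤ 1 := hcount_inv a haInv
    · rw [List.count_eq_zero.mpr ha]
      exact Nat.zero_le 1
  have hmapf_nodup : (rs.map f).Nodup := by
    refine List.Nodup.map_on ?_ hrs_nodup
    intro x hx y hy hxy
    have h1 : x.opId = y.opId := by
      rw [← (hf x hx).2.2.1, ← (hf y hy).2.2.1, hxy]
    obtain ⟨ix, hix⟩ := List.mem_iff_getElem?.mp (hrs_mem x hx).1
    obtain ⟨iy, hiy⟩ := List.mem_iff_getElem?.mp (hrs_mem y hy).1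
    have hii : ix = iy := hwfS.uniqueRsp x.opId ix iy ⟨x, hix, (hrs_mem x hx).2, rfl⟩
      ⟨y, hiy, (hrs_mem y hy).2, h1.symm⟩
    subst hii
    rw [hix] at hiy
    exact Option.some.inj hiy
  have htofin : (rs.map f).toFinset = ((S.filter prd).filter (fun e => e.isInv)).toFinset := by
    ext a
    simp only [List.mem_toFinset, List.mem_map, List.mem_filter]
    constructor
    · rintro ⟨e, he, rfl⟩
      obtain ⟨hfS, hfInv, hfop, _, _, _⟩ := hf e he
      have hr : Responded S (f e).opId := by
        rw [hfop]; exact hresp_of_respS e (hrs_mem e he).1 (hrs_mem e he).2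
      exact ⟨⟨hfS, (hprd_inv _ hfS hfInv).mpr hr⟩, hfInv⟩
    · rintro ⟨⟨haS, haprd⟩, haInv⟩
      have hr : Responded S a.opId := (hprd_inv a haS haInv).mp haprd
      obtain ⟨j, e1, hj, h1, h2⟩ := hr
      have he1rs : e1 ∈ rs := by
        rw [hrs_def]; exact List.mem_filter.mpr ⟨List.mem_of_getElem? hj, by simp [h1]⟩
      exact ⟨e1, he1rs, hfinj a haS haInv e1 he1rs h2.symm⟩
  have hinvperm : (rs.map f).Perm ((S.filter prd).filter (fun e => e.isInv)) :=
    List.perm_of_nodup_nodup_toFinset_eq hmapf_nodup hinvL_nodup htofin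
  have hrsperm : rs.Perm ((S.filter prd).filter (fun e => !e.isInv)) := by
    rw [hrspL]
  have hpermF : L0.Perm (S.filter prd) :=
    hperm1.trans ((hinvperm.append hrsperm).trans hsplit)
  have hcompletion : IsCompletion S (S.filter prd) := by
    refine ⟨P, [], ?_, ?_, ?_⟩
    · intro o' h
      rw [hP_def] at h
      exact of_decide_eq_true h
    · intro e he; simp at he
    · rw [List.append_nil, hprd_def]
  have hprec : ∀ o1 o2, Precedes S o1 o2 → Invoked L0 o2 → Precedes L0 o1 o2 := by
    rintro o1 o2 ⟨i, j, hij, ⟨a1, hi, ha1inv, ha1op⟩, ⟨a2, hj, ha2inv, ha2op⟩⟩ hinvk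
    obtain ⟨k0, e0, hk0, he0inv, he0op⟩ := hinvk
    have hk0even : k0 % 2 = 0 := by
      by_contra h
      have h1 : 2 * (k0/2) + 1 = k0 := by omega
      have hk' : L0[2*(k0/2)+1]? = some e0 := by rw [h1]; exact hk0
      rw [(hidx (k0/2)).2] at hk'
      have := (hrs_mem e0 (List.mem_of_getElem? hk')).2
      rw [this] at he0inv; simp at he0inv
    have h2k : 2 * (k0/2) = k0 := by omega
    have hk' : L0[2*(k0/2)]? = some e0 := by rw [h2k]; exact hk0
    rw [(hidx (k0/2)).1] at hk'
    cases hre : rs[k0/2]? with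
    | none => rw [hre] at hk'; simp at hk'
    | some e2 =>
      rw [hre] at hk'
      obtain rfl : f e2 = e0 := by simpa using hk'
      have he2rs := List.mem_of_getElem? hre
      have he2op : e2.opId = o2 := by rw [← (hf e2 he2rs).2.2.1]; exact he0op
      obtain ⟨j2, hj2⟩ := List.mem_iff_getElem?.mp (hrs_mem e2 he2rs).1
      obtain ⟨i2, e3, hi2j2, hi2, hb1, hb2, _, _, _⟩ :=
        hwfS.rspMatched j2 e2 hj2 (hrs_mem e2 he2rs).2
      have hi2j : i2 = j := hwfS.uniqueInv o2 i2 j ⟨e3, hi2, hb1, by rw [hb2, he2op]⟩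
        ⟨a2, hj, ha2inv, ha2op⟩
      have hij2 : i < j2 := by omega
      obtain ⟨k1, k2, hk12, hA, hB⟩ := filter_two_pos (p := fun e => !e.isInv) hij2 hi hj2
        (by simp [ha1inv]) (by simp [(hrs_mem e2 he2rs).2])
      have hA' : rs[k1]? = some a1 := by rw [hrs_def]; exact hA
      have hB' : rs[k2]? = some e2 := by rw [hrs_def]; exact hB
      refine ⟨2*k1+1, 2*k2, by omega, ⟨a1, ?_, ha1inv, ha1op⟩,
        ⟨f e2, ?_, (hf e2 he2rs).2.1, ?_⟩⟩
      · rw [(hidx k1).2]; exact hA'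
      · rw [(hidx k2).1, hB']; rfl
      · rw [(hf e2 he2rs).2.2.1]; exact he2op
  have hmemL0 : ∀ e ∈ L0, e ∈ S := by
    intro e he
    rw [hL0_def] at he
    obtain ⟨e1, he1, hmem⟩ := List.mem_flatMap.mp he
    have hmem' : e = f e1 ∨ e = e1 := by simpa using hmem
    rcases hmem' with h | h
    · rw [h]; exact (hf e1 he1).1
    · rw [h]; exact (hrs_mem e1 he1).1
  have hskelL0 : IsSkeleton L0 := by
    show L0.map Ev.skel = L0
    have hforall : ∀ e ∈ L0, e.skel = e :=
      fun e he => map_eq_self_forall hskelS e (hmemL0 e he)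
    exact (List.map_congr_left hforall).trans (List.map_id L0)
  have hrespL0 : ∀ e ∈ S, e.isInv = false → e ∈ L0 := by
    intro e he hInv
    have herss : e ∈ rs := by
      rw [hrs_def]; exact List.mem_filter.mpr ⟨he, by simp [hInv]⟩
    rw [hL0_def]
    exact List.mem_flatMap.mpr ⟨e, herss, by simp⟩
  exact ⟨L0, hskelL0, ⟨hseq, hcompl, ⟨S.filter prd, hcompletion, hpermF⟩, hprec⟩, hrespL0⟩

lemma lin_uniqueRsp {S L : List (Ev X V)} (hwfS : WellFormed S)
    (hseq : Sequential L) (hc : ∃ H'', IsCompletion S H'' ∧ L.Perm H'') :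
    ∀ o' i j, RspAt L o' i → RspAt L o' j → i = j := by
  classical
  obtain ⟨H'', ⟨P, R, hP, hR, hH''⟩, hperm⟩ := hc
  intro o' i j hi hj
  set q : Ev X V → Bool := fun e => e.isInv && (e.opId == o') with hq_def
  have hqL : L.countP q ≤ 1 := by
    have h1 : L.countP q = H''.countP q := hperm.countP_eq q
    have h2 : R.countP q = 0 := by
      apply List.countP_eq_zero.mpr
      intro e he
      simp [hq_def, (hR e he).1]
    have h3 : (S.filter (fun e => !(P e.opId))).countP q ≤ S.countP q :=
      (List.filter_sublist (l := S)).countP_le (p := q)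
    have h4 : S.countP q ≤ 1 := by
      by_contra h
      obtain ⟨i', j', a, b, hij', ha, hb, pa, pb⟩ := countP_two_pos (l := S) (p := q) (by omega)
      rw [hq_def] at pa pb
      simp only [Bool.and_eq_true, beq_iff_eq] at pa pb
      exact absurd (hwfS.uniqueInv o' i' j' ⟨a, ha, pa.1, pa.2⟩ ⟨b, hb, pb.1, pb.2⟩) (by omega)
    rw [h1, hH'', List.countP_append, h2]
    omega
  have hodd : ∀ k, RspAt L o' k → k % 2 = 1 ∧ ∃ e', L[k-1]? = some e' ∧ q e' = true := by
    rintro k ⟨e, hk, hinv, hop⟩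
    have h := hseq k e hk
    have hk1 : k % 2 = 1 := by
      rcases Nat.mod_two_eq_zero_or_one k with h0 | h1
      · rw [h.1 h0] at hinv; simp at hinv
      · exact h1
    obtain ⟨_, e', he', h1, h2, _⟩ := h.2 hk1
    exact ⟨hk1, e', he', by simp [hq_def, h1, h2, hop]⟩
  obtain ⟨hi1, ei, hei, hqi⟩ := hodd i hi
  obtain ⟨hj1, ej, hej, hqj⟩ := hodd j hj
  by_contra hne
  rcases Nat.lt_or_ge i j with hlt | hge
  · have hlt' : i - 1 < j - 1 := by omega
    have := two_le_countP hlt' hei hej hqi hqj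
    omega
  · have hlt : j < i := by omega
    have hlt' : j - 1 < i - 1 := by omega
    have := two_le_countP hlt' hej hei hqj hqi
    omega

lemma lin_count_le_one {S L : List (Ev X V)} [DecidableEq (Ev X V)] (hwfS : WellFormed S)
    (hlin : Linearization L S) : ∀ a ∈ L, L.count a ≤ 1 := by
  obtain ⟨hseq, _, ⟨H'', hcomp, hperm⟩, _⟩ := hlin
  intro a _
  obtain ⟨P, R, hP, hR, hH''⟩ := hcomp
  have hLa : L.count a = (S.filter (fun e => !(P e.opId))).count a + R.count a := by
    rw [hperm.count_eq a, hH'', List.count_append]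
  cases hA : a.isInv with
  | true =>
    have hRa : R.count a = 0 := List.count_eq_zero.mpr (fun hmem => by
      have := (hR a hmem).1; rw [hA] at this; simp at this)
    have h1 : (S.filter (fun e => !(P e.opId))).count a ≤ S.count a :=
      (List.filter_sublist (l := S)).count_le a
    have h2 : S.count a ≤ 1 := by
      by_contra h
      have h2' : 2 ≤ S.countP (fun b => b == a) := by rw [← List.count_eq_countP]; omega
      obtain ⟨i, j, b, c, hij, hb, hc, pb, pc⟩ := countP_two_pos h2'
      have hba : b = a := by simpa using pb
      have hca : c = a := by simpa using pc
      exact absurd (hwfS.uniqueInv a.opId i j ⟨b, hb, by rw [hba]; exact hA, by rw [hba]⟩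
        ⟨c, hc, by rw [hca]; exact hA, by rw [hca]⟩) (by omega)
    omega
  | false =>
    by_contra h
    have h2 : 2 ≤ L.countP (fun b => b == a) := by rw [← List.count_eq_countP]; omega
    obtain ⟨i, j, b, c, hij, hb, hc, pb, pc⟩ := countP_two_pos h2
    have hba : b = a := by simpa using pb
    have hca : c = a := by simpa using pc
    exact absurd (lin_uniqueRsp hwfS hseq ⟨H'', ⟨P, R, hP, hR, hH''⟩, hperm⟩ a.opId i j
      ⟨b, hb, by rw [hba]; exact hA, by rw [hba]⟩
      ⟨c, hc, by rw [hca]; exact hA, by rw [hca]⟩) (by omega)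

def rspOf (e : Ev X V) : Ev X V := .rsp e.proc e.opId e.obj e.isQuery none

lemma lin_mem_E {S L : List (Ev X V)} (hskelL : IsSkeleton L) (hlin : Linearization L S) :
    ∀ a ∈ L, a ∈ S ++ S.map rspOf := by
  obtain ⟨_, _, ⟨H'', hcomp, hperm⟩, _⟩ := hlin
  obtain ⟨P, R, hP, hR, hH''⟩ := hcomp
  intro a ha
  have haH'' : a ∈ H'' := hperm.mem_iff.mp ha
  rw [hH''] at haH''
  rcases List.mem_append.mp haH'' with h | h
  · exact List.mem_append.mpr (Or.inl (List.mem_filter.mp h).1)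
  · obtain ⟨hInv, _, _, i, e', hi, h1, h2, h3, h4, h5⟩ := hR a h
    have hskel_a : a.skel = a := map_eq_self_forall hskelL a ha
    refine List.mem_append.mpr (Or.inr ?_)
    refine List.mem_map.mpr ⟨e', List.mem_of_getElem? hi, ?_⟩
    cases a with
    | inv _ _ _ _ _ => simp [Ev.isInv] at hInv
    | rsp p oid x qq r =>
      have hrn : r = none := by
        have := hskel_a
        simp only [Ev.skel] at this
        exact (Ev.rsp.injEq _ _ _ _ _ _ _ _ _ _).mp this |>.2.2.2.2.symm
      subst hrn
      have h2' : e'.opId = oid := h2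
      have h3' : e'.proc = p := h3
      have h4' : e'.obj = x := h4
      have h5' : e'.isQuery = qq := h5
      simp only [rspOf]
      rw [h2', h3', h4', h5']

lemma finite_subperm {α : Type*} [DecidableEq α] (D : List α) :
    {l : List α | l.Subperm D}.Finite := by
  apply Set.Finite.subset (D.sublists.flatMap List.permutations).toFinset.finite_toSet
  intro l hl
  obtain ⟨s, hs1, hs2⟩ := hl
  simp only [Finset.coe_sort_coe, Finset.mem_coe, List.mem_toFinset, List.mem_flatMap]
  exact ⟨s, List.mem_sublists.mpr hs2, List.mem_permutations.mpr hs1.symm⟩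

end VMinAux


/-- **Well-definedness of `v_min` and `v_max`**: for a well-formed history `H`,
a query `o` that returns in `H`, and a deterministic quantitative sequential
specification `spec`, the set of values that the query may return across all
linearizations of the skeleton `H?` is nonempty and finite; in particular it
has a minimum and a maximum. -/
theorem vmin_vmax_well_defined {X V : Type} [LinearOrder V]
    (H : List (Ev X V)) (spec : DetSpec X V) (o : ℕ) (v : V)
    (hwf : Hist.WellFormed H) (hq : Hist.QueryReturns H o v) :
    (linRetSet H spec o).Nonempty ∧ (linRetSet H spec o).Finite ∧
    (∃ lo ∈ linRetSet H spec o, ∀ r ∈ linRetSet H spec o, lo ≤ r) ∧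
    (∃ hi ∈ linRetSet H spec o, ∀ r ∈ linRetSet H spec o, r ≤ hi) := by
  classical
  have hwfS : Hist.WellFormed (Hist.skeleton H) := VMinAux.wf_skeleton hwf
  have hskelS : Hist.IsSkeleton (Hist.skeleton H) := VMinAux.isSkeleton_skeleton H
  -- Nonemptiness
  obtain ⟨L0, hskelL0, hlin0, hresp0⟩ := VMinAux.exists_lin (Hist.skeleton H) hwfS hskelS
  obtain ⟨i, e, hi, h1, h2, h3, h4⟩ := hq
  have heS : (Hist.skeleton H)[i]? = some e.skel := by
    rw [VMinAux.skeleton_getElem?, hi]; rfl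
  have hmem0 := hresp0 e.skel (List.mem_of_getElem? heS) (by simpa using h1)
  obtain ⟨k, hk⟩ := List.mem_iff_getElem?.mp hmem0
  have hmemtau := spec.tau_mem L0 hlin0.1 hskelL0
  have hsk := spec.tau_skeleton L0 hlin0.1 hskelL0
  have htauk : ∃ e'', (spec.tau L0)[k]? = some e'' ∧ e''.skel = e.skel := by
    have hh : (Hist.skeleton (spec.tau L0))[k]? = some e.skel := by rw [hsk]; exact hk
    rw [VMinAux.skeleton_getElem?] at hh
    cases h : (spec.tau L0)[k]? with
    | none => rw [h] at hh; simp at hh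
    | some e'' => rw [h] at hh; exact ⟨e'', rfl, by simpa using hh⟩
  obtain ⟨e'', hke, hskel_e⟩ := htauk
  have hinv'' : e''.isInv = false := by
    have hc := congrArg Ev.isInv hskel_e
    simpa [h1] using hc
  have hq'' : e''.isQuery = true := by
    have hc := congrArg Ev.isQuery hskel_e
    simpa [h2] using hc
  have hop'' : e''.opId = o := by
    have hc := congrArg Ev.opId hskel_e
    simpa [h3] using hc
  obtain ⟨v0, hv0⟩ := spec.total _ hmemtau k e'' hke hinv'' hq''
  have hqr0 : Hist.QueryReturns (spec.tau L0) o v0 := ⟨k, e'', hke, hinv'', hq'', hop'', hv0⟩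
  have hne : (linRetSet H spec o).Nonempty := ⟨v0, L0, hskelL0, hlin0, hqr0⟩
  -- Finiteness
  have hLSfin : {L : List (Ev X V) |
      Hist.IsSkeleton L ∧ Hist.Linearization L (Hist.skeleton H)}.Finite := by
    apply Set.Finite.subset
      (VMinAux.finite_subperm ((Hist.skeleton H ++ (Hist.skeleton H).map VMinAux.rspOf).dedup))
    rintro L ⟨hsk', hlin'⟩
    rw [Set.mem_setOf_eq, List.subperm_ext_iff]
    intro x hx
    have hc1 := VMinAux.lin_count_le_one hwfS hlin' x hx
    have hc2 := VMinAux.lin_mem_E hsk' hlin' x hx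
    rw [List.count_dedup, if_pos hc2]
    exact hc1
  have hsubset : linRetSet H spec o ⊆
      (fun L => (Hist.retOf (spec.tau L) o).getD v) ''
        {L : List (Ev X V) | Hist.IsSkeleton L ∧ Hist.Linearization L (Hist.skeleton H)} := by
    rintro r ⟨L, hskL, hlinL, hqr⟩
    refine ⟨L, ⟨hskL, hlinL⟩, ?_⟩
    obtain ⟨i', e1, hi', hinv1, hqy1, hop1, hret1⟩ := hqr
    have hskL' := spec.tau_skeleton L hlinL.1 hskL
    have hpred1 : (fun e => !e.isInv && e.isQuery && e.opId == o) e1 = true := by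
      simp [hinv1, hqy1, hop1]
    have hsome : ((spec.tau L).find? (fun e => !e.isInv && e.isQuery && e.opId == o)).isSome := by
      rw [List.find?_isSome]
      exact ⟨e1, List.mem_of_getElem? hi', hpred1⟩
    obtain ⟨e0, he0⟩ := Option.isSome_iff_exists.mp hsome
    have hp0 := List.find?_some he0
    simp only [Bool.and_eq_true, Bool.not_eq_true', beq_iff_eq] at hp0
    obtain ⟨i0, hi0⟩ := List.mem_iff_getElem?.mp (List.mem_of_find?_eq_some he0)
    have hLi : L[i']? = some e1.skel := by
      rw [← hskL', VMinAux.skeleton_getElem?, hi']; rfl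
    have hLi0 : L[i0]? = some e0.skel := by
      rw [← hskL', VMinAux.skeleton_getElem?, hi0]; rfl
    have hii : i0 = i' := VMinAux.lin_uniqueRsp hwfS hlinL.1 hlinL.2.2.1 o i0 i'
      ⟨e0.skel, hLi0, by simp [hp0.1.1], by simp [hp0.2]⟩
      ⟨e1.skel, hLi, by simp [hinv1], by simp [hop1]⟩
    subst hii
    rw [hi'] at hi0
    obtain rfl : e1 = e0 := Option.some.inj hi0
    show (Hist.retOf (spec.tau L) o).getD v = r
    rw [Hist.retOf, he0]
    simp [hret1]
  have hfin : (linRetSet H spec o).Finite := Set.Finite.subset (hLSfin.image _) hsubset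
  refine ⟨hne, hfin, ?_, ?_⟩
  · obtain ⟨lo, hlo, hmin⟩ := Set.exists_min_image (linRetSet H spec o) id hfin hne
    exact ⟨lo, hlo, hmin⟩
  · obtain ⟨hi', hhi, hmax⟩ := Set.exists_max_image (linRetSet H spec o) id hfin hne
    exact ⟨hi', hhi, hmax⟩
end

section
/- Counter-value invariant of the binary-snapshot reduction: let n ≥ 1 and let L be any list of updates in Fin n × Bool. Then the state (s_L, S_L) reached by processing L from the initial state satisfies: there exists c : ℕ such that S_L = c * 2^n + ∑_{i : Fin n} (if s_L i then 2^i else 0). -/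
/-- Processing one update `(i, b)` of the binary-snapshot reduction in state
`(s, S)`: if `s i = b` nothing happens; otherwise the local value of process
`i` becomes `b` and the batched counter is incremented by `2^i` (if `b`,
i.e. the component changes from 0 to 1) or by `2^n - 2^i` (otherwise). -/
def snapStep (n : ℕ) : ((Fin n → Bool) × ℕ) → (Fin n × Bool) → ((Fin n → Bool) × ℕ)
  | (s, S), (i, b) =>
    if s i = b then (s, S)
    else (Function.update s i b, S + if b then 2 ^ (i : ℕ) else 2 ^ n - 2 ^ (i : ℕ))

/-- The state `(s_L, S_L)` obtained by processing the updates of `L` in order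
from the initial state `(fun _ => false, 0)`. -/
def snapRun (n : ℕ) (L : List (Fin n × Bool)) : (Fin n → Bool) × ℕ :=
  L.foldl (snapStep n) (fun _ => false, 0)

/-- **Counter-value invariant of the binary-snapshot reduction** (Invariant 1
of the paper): for any list `L` of updates, the resulting counter value `S_L`
equals `c * 2^n + ∑_{i} (if s_L i then 2^i else 0)` for some `c : ℕ`. -/
theorem snapshot_counter_invariant (n : ℕ) (hn : 1 ≤ n) (L : List (Fin n × Bool)) :
    ∃ c : ℕ, (snapRun n L).2 =
      c * 2 ^ n + ∑ i : Fin n, (if (snapRun n L).1 i then 2 ^ (i : ℕ) else 0) := by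

  induction L using List.reverseRecOn with
  | nil => exact ⟨0, by simp [snapRun]⟩
  | append_singleton L x ih =>
    obtain ⟨c, hc⟩ := ih
    obtain ⟨j, b⟩ := x
    have hrun : snapRun n (L ++ [(j, b)]) = snapStep n (snapRun n L) (j, b) := by
      simp [snapRun]
    set s := (snapRun n L).1 with hs
    set S := (snapRun n L).2 with hS
    rw [hrun]
    show ∃ c : ℕ, (snapStep n (s, S) (j, b)).2 =
      c * 2 ^ n + ∑ i : Fin n, (if (snapStep n (s, S) (j, b)).1 i then 2 ^ (i : ℕ) else 0)
    unfold snapStep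
    by_cases h : s j = b
    · simp only [h, if_pos rfl]
      exact ⟨c, hc⟩
    · simp only [h, if_false]
      have hsplit : ∀ t : Fin n → Bool,
          (∑ i : Fin n, (if t i then 2 ^ (i : ℕ) else 0)) =
          (if t j then 2 ^ (j : ℕ) else 0) +
          ∑ i ∈ Finset.univ.erase j, (if t i then 2 ^ (i : ℕ) else 0) :=
        fun t => (Finset.add_sum_erase Finset.univ _ (Finset.mem_univ j)).symm
    
      have hrest : ∑ i ∈ Finset.univ.erase j,
          (if Function.update s j b i then 2 ^ (i : ℕ) else 0) =
          ∑ i ∈ Finset.univ.erase j, (if s i then 2 ^ (i : ℕ) else 0) := by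
        apply Finset.sum_congr rfl
        intro i hi
        rw [Function.update_of_ne (Finset.ne_of_mem_erase hi)]
      have hle : 2 ^ (j : ℕ) ≤ 2 ^ n := Nat.pow_le_pow_right (by norm_num) (le_of_lt j.2)
      cases b with
      | true =>
        have hsj : s j = false := by simpa using h
        refine ⟨c, ?_⟩
        rw [hsplit (Function.update s j true), hrest, Function.update_self]
        rw [hsplit s, hsj] at hc
        simp only [if_true, Bool.false_eq_true, if_false] at hc ⊢
        omega
      | false =>
        have hsj : s j = true := by simpa using h
        refine ⟨c + 1, ?_⟩
        rw [hsplit (Function.update s j false), hrest, Function.update_self]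
        rw [hsplit s, hsj] at hc
        simp only [if_true, Bool.false_eq_true, if_false] at hc ⊢
        have h2 : (c + 1) * 2 ^ n = c * 2 ^ n + 2 ^ n := by ring
        omega
end

section
/- Scan correctness of the binary-snapshot reduction: let n ≥ 1 and let L be any list of updates in Fin n × Bool, with resulting state (s_L, S_L). Then for every i : Fin n, Nat.testBit S_L i = s_L i, and s_L i equals the second component of the last pair in L whose first component is i (and equals false if no such pair exists). Consequently, a scan that reads the counter value S_L and returns its n low-order bits returns, for each process i, the parameter of the last update by process i preceding the scan, or 0 if there is none. -/
/-- value of bits below `n` of a bit assignment -/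
def rval (n : ℕ) (f : ℕ → Bool) : ℕ := ∑ j ∈ Finset.range n, (f j).toNat * 2 ^ j

lemma rval_lt (n : ℕ) (f : ℕ → Bool) : rval n f < 2 ^ n := by
  induction n with
  | zero => simp [rval]
  | succ n ih =>
    rw [rval, Finset.sum_range_succ, pow_succ]
    have : (f n).toNat ≤ 1 := Bool.toNat_le (f n)
    have h2 : (f n).toNat * 2 ^ n ≤ 2 ^ n := by nlinarith
    have := ih
    rw [rval] at this
    omega

lemma testBit_rval (n : ℕ) (f : ℕ → Bool) (k : ℕ) (hk : k < n) :
    Nat.testBit (rval n f) k = f k := by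
  induction n with
  | zero => omega
  | succ n ih =>
    rw [rval, Finset.sum_range_succ, ← rval]
    have heq : rval n f + (f n).toNat * 2 ^ n = 2 ^ n * (f n).toNat + rval n f := by ring
    rw [heq, Nat.testBit_two_pow_mul_add _ (rval_lt n f) k]
    rcases Nat.lt_or_ge k n with h | h
    · simp [h, ih h]
    · have hkn : k = n := by omega
      subst hkn
      simp only [Nat.lt_irrefl, if_false, Nat.sub_self, Nat.testBit_bool_toNat]
      cases f k <;> simp

/-- the intended counter value for local state `s` -/
def sval (n : ℕ) (s : Fin n → Bool) : ℕ := ∑ j : Fin n, (s j).toNat * 2 ^ (j : ℕ)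

lemma sval_eq_rval (n : ℕ) (s : Fin n → Bool) :
    sval n s = rval n (fun j => if h : j < n then s ⟨j, h⟩ else false) := by
  rw [sval, rval, Finset.sum_range fun j => _]
  apply Finset.sum_congr rfl
  intro j _
  simp [j.isLt]

lemma testBit_sval (n : ℕ) (s : Fin n → Bool) (i : Fin n) :
    Nat.testBit (sval n s) (i : ℕ) = s i := by
  rw [sval_eq_rval, testBit_rval _ _ _ i.isLt]
  simp

lemma sval_lt (n : ℕ) (s : Fin n → Bool) : sval n s < 2 ^ n := by
  rw [sval_eq_rval]; exact rval_lt _ _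

lemma sval_decomp (n : ℕ) (s : Fin n → Bool) (i : Fin n) :
    sval n s = (s i).toNat * 2 ^ (i : ℕ) +
      ∑ j ∈ Finset.univ.erase i, (s j).toNat * 2 ^ (j : ℕ) := by
  rw [sval, ← Finset.add_sum_erase _ _ (Finset.mem_univ i)]

lemma sval_update (n : ℕ) (s : Fin n → Bool) (i : Fin n) (b : Bool) :
    sval n (Function.update s i b) = b.toNat * 2 ^ (i : ℕ) +
      ∑ j ∈ Finset.univ.erase i, (s j).toNat * 2 ^ (j : ℕ) := by
  rw [sval_decomp n _ i, Function.update_self]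
  congr 1
  apply Finset.sum_congr rfl
  intro j hj
  rw [Function.update_of_ne (Finset.ne_of_mem_erase hj)]

lemma snapStep_fst (n : ℕ) (st : (Fin n → Bool) × ℕ) (p : Fin n × Bool) :
    (snapStep n st p).1 = Function.update st.1 p.1 p.2 := by
  obtain ⟨s, S⟩ := st
  obtain ⟨i, b⟩ := p
  rw [snapStep]
  split
  · next h => simp [← h, Function.update_eq_self]
  · rfl

lemma snapRun_append (n : ℕ) (L : List (Fin n × Bool)) (p : Fin n × Bool) :
    snapRun n (L ++ [p]) = snapStep n (snapRun n L) p := by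
  simp [snapRun, List.foldl_append]

lemma snapStep_inv (n : ℕ) (s : Fin n → Bool) (S : ℕ) (i : Fin n) (b : Bool)
    (ih : S % 2 ^ n = sval n s) :
    (snapStep n (s, S) (i, b)).2 % 2 ^ n = sval n (snapStep n (s, S) (i, b)).1 := by
  rw [snapStep]
  have hlt : sval n (Function.update s i b) < 2 ^ n := sval_lt n _
  have hd := sval_decomp n s i
  have hu := sval_update n s i b
  have hin : 2 ^ (i : ℕ) < 2 ^ n := Nat.pow_lt_pow_right one_lt_two i.isLt
  split_ifs with h hb
  · exact ih
  · -- s i ≠ b, b = true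
    subst hb
    have hsi : s i = false := by simp_all
    rw [hsi] at hd
    simp only [Bool.toNat_false, Bool.toNat_true, zero_mul, one_mul,
      zero_add] at hd hu
    have hv : sval n (Function.update s i true) = sval n s + 2 ^ (i : ℕ) := by omega
    simp only
    rw [Nat.add_mod, ih, Nat.mod_eq_of_lt hin, ← hv, Nat.mod_eq_of_lt hlt]
  · -- s i ≠ b, b = false
    have hbf : b = false := by cases b <;> simp_all
    subst hbf
    have hsi : s i = true := by simp_all
    rw [hsi] at hd
    simp only [Bool.toNat_false, Bool.toNat_true, zero_mul, one_mul,
      zero_add] at hd hu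
    simp only
    rw [Nat.add_mod, ih,
      Nat.mod_eq_of_lt (Nat.sub_lt (Nat.two_pow_pos n) (Nat.two_pow_pos _))]
    have key : sval n s + (2 ^ n - 2 ^ (i : ℕ)) =
        2 ^ n + sval n (Function.update s i false) := by
      rw [hd, hu, add_right_comm, Nat.add_sub_cancel' hin.le]
    rw [key, Nat.add_mod_left, Nat.mod_eq_of_lt hlt]

lemma snap_invariant (n : ℕ) (L : List (Fin n × Bool)) :
    (snapRun n L).2 % 2 ^ n = sval n (snapRun n L).1 := by
  induction L using List.reverseRecOn with
  | nil => simp [snapRun, sval]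
  | append_singleton L p ih =>
    obtain ⟨i, b⟩ := p
    rw [snapRun_append]
    have := snapStep_inv n (snapRun n L).1 (snapRun n L).2 i b ih
    simpa using this

/-- **Scan correctness of the binary-snapshot reduction** (Lemma 3 of the
paper): after processing any list `L` of updates, for every process `i`, the
`i`-th bit of the counter value `S_L` equals the local value `s_L i`, and
`s_L i` is the parameter of the last update in `L` by process `i` (or `false`
if there is none).  Hence a scan that reads the counter and returns its `n`
low-order bits returns, for each process, the parameter of its last
preceding update, or 0 if none exists. -/
theorem snapshot_scan_correct (n : ℕ) (hn : 1 ≤ n) (L : List (Fin n × Bool)) (i : Fin n) :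
    Nat.testBit (snapRun n L).2 (i : ℕ) = (snapRun n L).1 i ∧
    (snapRun n L).1 i =
      ((((L.filter (fun p => decide (p.1 = i))).getLast?).map Prod.snd).getD false) := by
  constructor
  · have h1 : Nat.testBit ((snapRun n L).2 % 2 ^ n) (i : ℕ) =
        Nat.testBit (snapRun n L).2 (i : ℕ) := by
      rw [Nat.testBit_mod_two_pow]
      simp [i.isLt]
    rw [← h1, snap_invariant, testBit_sval]
  · induction L using List.reverseRecOn with
    | nil => simp [snapRun]
    | append_singleton L p ih =>
      obtain ⟨j, b⟩ := p
      rw [snapRun_append, snapStep_fst, List.filter_append]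
      by_cases h : j = i
      · subst h
        simp [Function.update_self]
      · simp only [List.filter_cons, List.filter_nil]
        simp only [h, decide_false, if_false, Bool.false_eq_true, List.append_nil]
        rw [Function.update_of_ne (fun hh => h hh.symm)]
        exact ih
end
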